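/- For all λ, μ ∈ K^{d+1}, the maps φ^λ satisfy φ^λ ∘ φ^μ = φ^{λ+μ}, and φ^0 = id_{D ⊗ D}. Consequently, for every λ ∈ K^{d+1}, φ^λ is bijective with inverse φ^{−λ}. -/

import Mathlib

open TensorProduct Finset

private lemma one_dim' {K : Type*} [CommRing K] (x y : K) (m : ℕ) :
    ∑ j ∈ Iic m, (m.choose j : K) * x ^ j * y ^ (m - j) = (x + y) ^ m := by
  rw [show Iic m = range (m+1) by ext x; simp [Nat.lt_succ_iff], add_pow]
  exact Finset.sum_congr rfl fun j _ => by ring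

private lemma Iic_pi' {k : ℕ} (c : Fin k → ℕ) :
    Finset.Iic c = Fintype.piFinset (fun i => Finset.Iic (c i)) := by
  ext x; simp [Fintype.mem_piFinset, Pi.le_def]

private lemma sum_reindex' {k : ℕ} {M : Type*} [AddCommMonoid M] (c : Fin k → ℕ)
    (F : (Fin k → ℕ) → (Fin k → ℕ) → M) :
    ∑ l ∈ Iic c, ∑ m ∈ Iic (c - l), F l m = ∑ n ∈ Iic c, ∑ l ∈ Iic n, F l (n - l) := by
  rw [Finset.sum_sigma', Finset.sum_sigma']
  refine Finset.sum_nbij' (i := fun p => ⟨p.1 + p.2, p.1⟩) (j := fun p => ⟨p.2, p.1 - p.2⟩)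
    ?_ ?_ ?_ ?_ ?_
  · rintro ⟨l, m⟩ h
    simp only [Finset.mem_sigma, Finset.mem_Iic, Pi.le_def, Pi.sub_apply, Pi.add_apply] at h ⊢
    exact ⟨fun i => by have := h.1 i; have := h.2 i; omega, fun i => by omega⟩
  · rintro ⟨n, l⟩ h
    simp only [Finset.mem_sigma, Finset.mem_Iic, Pi.le_def, Pi.sub_apply] at h ⊢
    exact ⟨fun i => (h.2 i).trans (h.1 i), fun i => by have := h.1 i; have := h.2 i; omega⟩
  · rintro ⟨l, m⟩ h
    simp only [Finset.mem_sigma, Finset.mem_Iic, Pi.le_def] at h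
    ext i <;> simp
  · rintro ⟨n, l⟩ h
    simp only [Finset.mem_sigma, Finset.mem_Iic, Pi.le_def] at h
    ext i
    · simp only [Pi.add_apply, Pi.sub_apply]; have := h.2 i; omega
    · simp
  · rintro ⟨l, m⟩ h
    simp

private lemma key_coeff' {k : ℕ} {K : Type*} [CommRing K] (lam mu : Fin k → K) (b n : Fin k → ℕ)
    (hnb : ∀ i, n i ≤ b i) :
    ∑ l ∈ Iic n,
      (((∏ i, lam i ^ (n - l) i) * ∏ i, (((b - l) i).choose ((n - l) i) : K)) *
        ((∏ i, mu i ^ l i) * ∏ i, ((b i).choose (l i) : K))) =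
      (∏ i, (lam + mu) i ^ n i) * ∏ i, ((b i).choose (n i) : K) := by
  have step : ∀ l ∈ Iic n,
      (((∏ i, lam i ^ (n - l) i) * ∏ i, (((b - l) i).choose ((n - l) i) : K)) *
        ((∏ i, mu i ^ l i) * ∏ i, ((b i).choose (l i) : K))) =
      (∏ i, ((b i).choose (n i) : K)) *
        ∏ i, (((n i).choose (l i) : K) * mu i ^ l i * lam i ^ (n i - l i)) := by
    intro l hl
    rw [Finset.mem_Iic] at hl
    simp only [← Finset.prod_mul_distrib]
    refine Finset.prod_congr rfl fun i _ => ?_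
    have h1 : (b i).choose (n i) * (n i).choose (l i) =
        (b i).choose (l i) * ((b i - l i)).choose (n i - l i) :=
      Nat.choose_mul (hl i)
    simp only [Pi.sub_apply]
    have h2 : ((b i).choose (n i) : K) * ((n i).choose (l i) : K) =
        ((b i).choose (l i) : K) * (((b i - l i)).choose (n i - l i) : K) := by
      exact_mod_cast congrArg (Nat.cast (R := K)) h1
    calc lam i ^ (n i - l i) * ((b i - l i).choose (n i - l i) : K) *
          (mu i ^ l i * ((b i).choose (l i) : K))
        = (((b i).choose (l i) : K) * (((b i - l i)).choose (n i - l i) : K)) *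
            (mu i ^ l i * lam i ^ (n i - l i)) := by ring
      _ = (((b i).choose (n i) : K) * ((n i).choose (l i) : K)) *
            (mu i ^ l i * lam i ^ (n i - l i)) := by rw [h2]
      _ = ((b i).choose (n i) : K) *
            (((n i).choose (l i) : K) * mu i ^ l i * lam i ^ (n i - l i)) := by ring
  rw [Finset.sum_congr rfl step, ← Finset.mul_sum]
  rw [Iic_pi']
  rw [← Finset.prod_univ_sum (fun i => Iic (n i))
    (fun i j => ((n i).choose j : K) * mu i ^ j * lam i ^ (n i - j))]
  rw [mul_comm]
  congr 1
  refine Finset.prod_congr rfl fun i _ => ?_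
  rw [one_dim' (mu i) (lam i) (n i)]
  simp [add_comm]

/-- The maps `φ^λ` satisfy `φ^λ ∘ φ^μ = φ^{λ+μ}` and `φ^0 = id`; consequently each `φ^λ`
is bijective with inverse `φ^{−λ}`.  Here `D` is the free `K`-vector space on `ℕ^{d+1}`
(a vector space with a basis `e` indexed by `ℕ^{d+1}`), and `φ^λ` is characterized on
basis vectors by `φ^λ(a ⊗ b) = Σ_{l ≤ min(a,b)} λ^l · binom(b,l) · (a − l) ⊗ (b − l)`. -/
theorem phi_lambda_group (K : Type*) [Field K] [CharZero K] (d : ℕ)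
    (D : Type*) [AddCommGroup D] [Module K D] (e : Module.Basis (Fin (d + 1) → ℕ) K D)
    (Φ : (Fin (d + 1) → K) → (TensorProduct K D D →ₗ[K] TensorProduct K D D))
    (hΦ : ∀ (lam : Fin (d + 1) → K) (a b : Fin (d + 1) → ℕ),
      Φ lam (e a ⊗ₜ e b) =
        ∑ l ∈ Finset.Iic (fun i => min (a i) (b i)),
          ((∏ i, lam i ^ l i) * ∏ i, ((b i).choose (l i) : K)) •
            (e (a - l) ⊗ₜ[K] e (b - l))) :
    (∀ lam mu : Fin (d + 1) → K, Φ lam ∘ₗ Φ mu = Φ (lam + mu)) ∧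
      Φ 0 = LinearMap.id ∧
      ∀ lam : Fin (d + 1) → K,
        Function.Bijective (Φ lam) ∧
          Φ lam ∘ₗ Φ (-lam) = LinearMap.id ∧ Φ (-lam) ∘ₗ Φ lam = LinearMap.id := by
  have comp : ∀ lam mu : Fin (d + 1) → K, Φ lam ∘ₗ Φ mu = Φ (lam + mu) := by
    intro lam mu
    refine (Module.Basis.tensorProduct e e).ext fun ⟨a, b⟩ => ?_
    rw [Module.Basis.tensorProduct_apply, LinearMap.comp_apply, hΦ mu a b, map_sum]
    set c : Fin (d + 1) → ℕ := fun i => min (a i) (b i) with hc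
    have lhs1 : ∀ l ∈ Iic c,
        Φ lam (((∏ i, mu i ^ l i) * ∏ i, ((b i).choose (l i) : K)) •
            (e (a - l) ⊗ₜ[K] e (b - l))) =
        ∑ m ∈ Iic (c - l),
          (((∏ i, lam i ^ m i) * ∏ i, (((b - l) i).choose (m i) : K)) *
            ((∏ i, mu i ^ l i) * ∏ i, ((b i).choose (l i) : K))) •
          (e (a - (l + m)) ⊗ₜ[K] e (b - (l + m))) := by
      intro l hl
      rw [Finset.mem_Iic] at hl
      rw [map_smul, hΦ lam (a - l) (b - l)]
      have hmin : (fun i => min ((a - l) i) ((b - l) i)) = c - l := by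
        funext i
        have := hl i
        simp only [Pi.sub_apply, hc]
        omega
      rw [hmin, Finset.smul_sum]
      refine Finset.sum_congr rfl fun m hm => ?_
      rw [smul_smul]
      have h1 : a - l - m = a - (l + m) := by funext i; simp only [Pi.sub_apply, Pi.add_apply]; omega
      have h2 : b - l - m = b - (l + m) := by funext i; simp only [Pi.sub_apply, Pi.add_apply]; omega
      rw [h1, h2, mul_comm]
    rw [Finset.sum_congr rfl lhs1]
    rw [sum_reindex' c (fun l m =>
      (((∏ i, lam i ^ m i) * ∏ i, (((b - l) i).choose (m i) : K)) *
        ((∏ i, mu i ^ l i) * ∏ i, ((b i).choose (l i) : K))) •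
      (e (a - (l + m)) ⊗ₜ[K] e (b - (l + m))))]
    rw [hΦ (lam + mu) a b]
    refine Finset.sum_congr rfl fun n hn => ?_
    rw [Finset.mem_Iic] at hn
    have hfix : ∀ l ∈ Iic n,
        (((∏ i, lam i ^ (n - l) i) * ∏ i, (((b - l) i).choose ((n - l) i) : K)) *
          ((∏ i, mu i ^ l i) * ∏ i, ((b i).choose (l i) : K))) •
        (e (a - (l + (n - l))) ⊗ₜ[K] e (b - (l + (n - l)))) =
        (((∏ i, lam i ^ (n - l) i) * ∏ i, (((b - l) i).choose ((n - l) i) : K)) *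
          ((∏ i, mu i ^ l i) * ∏ i, ((b i).choose (l i) : K))) •
        (e (a - n) ⊗ₜ[K] e (b - n)) := by
      intro l hl
      rw [Finset.mem_Iic] at hl
      have : l + (n - l) = n := by
        funext i
        have h3 : l i ≤ n i := hl i
        simp only [Pi.add_apply, Pi.sub_apply]
        omega
      rw [this]
    rw [Finset.sum_congr rfl hfix, ← Finset.sum_smul,
      key_coeff' lam mu b n (fun i => (hn i).trans (min_le_right _ _))]
  have zero : Φ 0 = LinearMap.id := by
    refine (Module.Basis.tensorProduct e e).ext fun ⟨a, b⟩ => ?_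
    rw [Module.Basis.tensorProduct_apply, hΦ 0 a b, LinearMap.id_apply]
    rw [Finset.sum_eq_single 0]
    · simp
    · intro l _ hl
      have : ∃ i, l i ≠ 0 := by
        by_contra h
        push_neg at h
        exact hl (funext h)
      obtain ⟨i, hi⟩ := this
      have : (∏ j, (0 : K) ^ l j) = 0 :=
        Finset.prod_eq_zero (Finset.mem_univ i) (zero_pow hi)
      simp only [Pi.zero_apply] at this ⊢
      rw [this, zero_mul, zero_smul]
    · intro h
      exact absurd (Finset.mem_Iic.mpr (by intro i; simp)) h
  refine ⟨comp, zero, fun lam => ?_⟩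
  have h1 : Φ lam ∘ₗ Φ (-lam) = LinearMap.id := by
    rw [comp, add_neg_cancel, zero]
  have h2 : Φ (-lam) ∘ₗ Φ lam = LinearMap.id := by
    rw [comp, neg_add_cancel, zero]
  have hli : Function.LeftInverse (Φ (-lam)) (Φ lam) := fun x => by
    have := congrArg (fun f => f x) h2; simpa using this
  have hri : Function.RightInverse (Φ (-lam)) (Φ lam) := fun x => by
    have := congrArg (fun f => f x) h1; simpa using this
  exact ⟨⟨hli.injective, hri.surjective⟩, h1, h2⟩
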